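/- Let k be a positive integer. For every integer n ≥ 2 and every function f from the primes to the real numbers, Σ_{d | n, d > 1, ω(d) ≥ k} μ(d) f(P_k(d)) = (−1)^k · C(ω(n)−1, k−1) · f(p(n)), where C(·,·) is the binomial coefficient (equal to 0 when ω(n)−1 < k−1) and the sum runs over divisors d > 1 of n having at least k distinct prime factors. -/

import Mathlib

open Finset ArithmeticFunction

/-- The `k`-th largest distinct prime factor of `n` (for `k ≥ 1`), defined when
`ω(n) ≥ k`; junk value `1` otherwise. -/
def kthLargestPrimeFac (k n : ℕ) : ℕ :=
  ((n.primeFactors.sort (· ≤ ·)).reverse).getD (k - 1) 1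

namespace DualityAux

/-- The `k`-th largest element of a finset of naturals. -/
def kthOf (k : ℕ) (S : Finset ℕ) : ℕ :=
  ((S.sort (· ≤ ·)).reverse).getD (k - 1) 1

lemma kthOf_insert_of_le {m p : ℕ} {S : Finset ℕ}
    (hp : ∀ q ∈ S, p ≤ q) (hpS : p ∉ S) (hcard : m + 1 ≤ S.card) :
    kthOf (m + 1) (insert p S) = kthOf (m + 1) S := by
  unfold kthOf
  rw [Finset.sort_insert _ hp hpS, List.reverse_cons,
    List.getD_append _ _ _ _ (by simp; omega)]

lemma kthOf_insert_of_eq {m p : ℕ} {S : Finset ℕ}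
    (hp : ∀ q ∈ S, p ≤ q) (hpS : p ∉ S) (hcard : S.card = m) :
    kthOf (m + 1) (insert p S) = p := by
  unfold kthOf
  rw [Finset.sort_insert _ hp hpS, List.reverse_cons,
    List.getD_append_right _ _ _ _ (by simp [hcard])]
  simp [hcard]

lemma squarefree_prod_primes {S : Finset ℕ} (hS : ∀ p ∈ S, p.Prime) :
    Squarefree (∏ p ∈ S, p) := by
  induction S using Finset.cons_induction with
  | empty => simp
  | cons p S hpS ih =>
    rw [Finset.prod_cons]
    have hp : p.Prime := hS p (Finset.mem_cons_self _ _)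
    have hcop : Nat.Coprime p (∏ q ∈ S, q) := by
      rw [hp.coprime_iff_not_dvd]
      intro hdvd
      obtain ⟨q, hq, hpq⟩ := (hp.prime.dvd_finset_prod_iff _).mp hdvd
      have hqp : q.Prime := hS q (Finset.mem_cons_of_mem hq)
      rw [(Nat.prime_dvd_prime_iff_eq hp hqp).mp hpq] at hpS
      exact hpS hq
    exact (Nat.squarefree_mul hcop).mpr
      ⟨hp.prime.squarefree, ih fun q hq => hS q (Finset.mem_cons_of_mem hq)⟩

lemma moebius_prod_primes {S : Finset ℕ} (hS : ∀ p ∈ S, p.Prime) :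
    moebius (∏ p ∈ S, p) = (-1) ^ S.card := by
  have hsq := squarefree_prod_primes hS
  rw [moebius_apply_of_squarefree hsq]
  congr 1
  have h1 : cardDistinctFactors (∏ p ∈ S, p) = cardFactors (∏ p ∈ S, p) :=
    (cardDistinctFactors_eq_cardFactors_iff_squarefree hsq.ne_zero).mpr hsq
  rw [← h1, cardDistinctFactors_apply, ← List.card_toFinset, Nat.toFinset_factors,
    Nat.primeFactors_prod hS]

end DualityAux

open DualityAux in
/-- Duality identity: for `k ≥ 1`, `n ≥ 2` and any real-valued function `f` on the primes,
`Σ_{d ∣ n, d > 1, ω(d) ≥ k} μ(d) f(P_k(d)) = (−1)^k C(ω(n)−1, k−1) f(p(n))`. -/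
theorem duality_kth_largest (k : ℕ) (hk : 1 ≤ k) (n : ℕ) (hn : 2 ≤ n) (f : ℕ → ℝ) :
    ∑ d ∈ n.divisors.filter (fun d => 1 < d ∧ k ≤ d.primeFactors.card),
        (moebius d : ℝ) * f (kthLargestPrimeFac k d)
      = (-1) ^ k * ((n.primeFactors.card - 1).choose (k - 1) : ℝ) * f n.minFac := by
  obtain ⟨m, rfl⟩ : ∃ m, k = m + 1 := ⟨k - 1, by omega⟩
  have hn0 : n ≠ 0 := by omega
  have hp0P : n.minFac ∈ n.primeFactors :=
    Nat.mem_primeFactors.mpr ⟨Nat.minFac_prime (by omega), Nat.minFac_dvd n, hn0⟩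
  have hmin : ∀ q ∈ n.primeFactors.erase n.minFac, n.minFac < q := by
    intro q hq
    rw [Finset.mem_erase] at hq
    have hqP := Nat.mem_primeFactors.mp hq.2
    exact lt_of_le_of_ne (Nat.minFac_le_of_dvd hqP.1.two_le hqP.2.1) (Ne.symm hq.1)
  -- Step 1 : restrict to squarefree divisors
  have hstep1 : ∑ d ∈ n.divisors.filter (fun d => 1 < d ∧ m + 1 ≤ d.primeFactors.card),
        (moebius d : ℝ) * f (kthLargestPrimeFac (m + 1) d)
      = ∑ d ∈ (n.divisors.filter
            (fun d => 1 < d ∧ m + 1 ≤ d.primeFactors.card)).filter Squarefree,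
        (moebius d : ℝ) * f (kthLargestPrimeFac (m + 1) d) := by
    refine (Finset.sum_subset (Finset.filter_subset _ _) ?_).symm
    intro d hd hnd
    have hns : ¬ Squarefree d := fun h => hnd (Finset.mem_filter.mpr ⟨hd, h⟩)
    rw [moebius_eq_zero_of_not_squarefree hns]
    simp
  rw [hstep1]
  -- Step 2 : reindex by subsets of the prime factors
  have hstep2 : ∑ d ∈ (n.divisors.filter
            (fun d => 1 < d ∧ m + 1 ≤ d.primeFactors.card)).filter Squarefree,
        (moebius d : ℝ) * f (kthLargestPrimeFac (m + 1) d)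
      = ∑ S ∈ n.primeFactors.powerset.filter (fun S => m + 1 ≤ S.card),
          (-1 : ℝ) ^ S.card * f (kthOf (m + 1) S) := by
    refine Finset.sum_nbij' (fun d => d.primeFactors) (fun S => ∏ p ∈ S, p) ?_ ?_ ?_ ?_ ?_
    · intro d hd
      simp only [Finset.mem_filter, Nat.mem_divisors] at hd
      refine Finset.mem_filter.mpr ⟨Finset.mem_powerset.mpr ?_, hd.1.2.2⟩
      exact Nat.primeFactors_mono hd.1.1.1 hn0
    · intro S hS
      simp only [Finset.mem_filter, Finset.mem_powerset] at hS
      have hprimes : ∀ p ∈ S, p.Prime := fun p hp => Nat.prime_of_mem_primeFactors (hS.1 hp)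
      have hdvd : (∏ p ∈ S, p) ∣ n :=
        (Finset.prod_dvd_prod_of_subset _ _ _ hS.1).trans (Nat.prod_primeFactors_dvd n)
      have hcardS : (∏ p ∈ S, p).primeFactors = S := Nat.primeFactors_prod hprimes
      have hne : S.Nonempty := Finset.card_pos.mp (by omega)
      obtain ⟨q, hq⟩ := hne
      have h1lt : 1 < ∏ p ∈ S, p := by
        have hq2 : 2 ≤ q := (hprimes q hq).two_le
        have : q ∣ ∏ p ∈ S, p := Finset.dvd_prod_of_mem _ hq
        have hpos : 0 < ∏ p ∈ S, p :=
          Finset.prod_pos fun p hp => (hprimes p hp).pos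
        have := Nat.le_of_dvd hpos this
        omega
      refine Finset.mem_filter.mpr ⟨Finset.mem_filter.mpr
        ⟨Nat.mem_divisors.mpr ⟨hdvd, hn0⟩, h1lt, by rw [hcardS]; exact hS.2⟩,
        squarefree_prod_primes hprimes⟩
    · intro d hd
      simp only [Finset.mem_filter] at hd
      exact Nat.prod_primeFactors_of_squarefree hd.2
    · intro S hS
      simp only [Finset.mem_filter, Finset.mem_powerset] at hS
      exact Nat.primeFactors_prod fun p hp => Nat.prime_of_mem_primeFactors (hS.1 hp)
    · intro d hd
      simp only [Finset.mem_filter] at hd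
      have hmu : moebius d = (-1) ^ d.primeFactors.card := by
        have : d = ∏ p ∈ d.primeFactors, p := (Nat.prod_primeFactors_of_squarefree hd.2).symm
        rw [this, moebius_prod_primes fun p hp => Nat.prime_of_mem_primeFactors hp,
          Nat.primeFactors_prod fun p hp => Nat.prime_of_mem_primeFactors hp]
      rw [hmu]
      push_cast
      rfl
  rw [hstep2]
  -- Step 3 : compute the sum over subsets
  rw [Finset.sum_filter]
  have hins : n.primeFactors = insert n.minFac (n.primeFactors.erase n.minFac) :=
    (Finset.insert_erase hp0P).symm
  rw [hins, Finset.sum_powerset_insert (Finset.notMem_erase _ _)]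
  set P' := n.primeFactors.erase n.minFac with hP'
  have hcombine : ∀ T ∈ P'.powerset,
      ((if m + 1 ≤ T.card then (-1 : ℝ) ^ T.card * f (kthOf (m + 1) T) else 0) +
        (if m + 1 ≤ (insert n.minFac T).card
          then (-1 : ℝ) ^ (insert n.minFac T).card * f (kthOf (m + 1) (insert n.minFac T))
          else 0))
      = if T.card = m then (-1 : ℝ) ^ (m + 1) * f n.minFac else 0 := by
    intro T hT
    rw [Finset.mem_powerset] at hT
    have hp0T : n.minFac ∉ T := fun h => Finset.notMem_erase _ _ (hT h)
    have hlt : ∀ q ∈ T, n.minFac ≤ q := fun q hq => (hmin q (hT hq)).le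
    have hcardins : (insert n.minFac T).card = T.card + 1 :=
      Finset.card_insert_of_notMem hp0T
    rcases lt_trichotomy T.card m with h | h | h
    · rw [if_neg (by omega), if_neg (by omega), if_neg (by omega)]
      ring
    · rw [if_neg (by omega), if_pos (by omega), if_pos h, hcardins, h,
        kthOf_insert_of_eq hlt hp0T h]
      ring
    · rw [if_pos (by omega), if_pos (by omega), if_neg (by omega), hcardins,
        kthOf_insert_of_le hlt hp0T (by omega)]
      ring
  rw [← Finset.sum_add_distrib, Finset.sum_congr rfl hcombine, ← Finset.sum_filter,
    ← Finset.powersetCard_eq_filter, Finset.sum_const, Finset.card_powersetCard]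
  have hcardP' : P'.card = n.primeFactors.card - 1 := Finset.card_erase_of_mem hp0P
  rw [hcardP']
  simp only [Nat.add_sub_cancel, nsmul_eq_mul]
  rw [← hins]
  ring
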